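/- Let n ≡ 0 (mod 4) and let S_n ⊆ (ℤ/2)^n be the code spanned by e_0, …, e_{n/2−1}. Then the weight enumerator of S_n satisfies the polynomial identity ∑_{c ∈ S_n} X^{n − wt(c)} Y^{wt(c)} = (1/2)·((X² − Y²)^{n/2} + (X² + Y²)^{n/2}) + 2^{n/2−1} (XY)^{n/2}. -/

import Mathlib

open Finset

/-- The Hamming weight of a binary word: the number of nonzero entries. -/
def wt {n : ℕ} (c : Fin n → ZMod 2) : ℕ := (Finset.univ.filter fun i => c i ≠ 0).card

/-- The generating vectors `e_0, …, e_{n/2−1}` of the code `S_n` (coordinates indexed by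
`j = 0, …, n−1`):  `(e_0)_j = 1` if `j = 0` or `j = n−2`, `(e_0)_j = 0` if `j = 1` or
`j = n−1`, and `(e_0)_j = j mod 2` otherwise; `(e_1)_j = j mod 2`; and for `k ≥ 2`,
`(e_k)_j = 1` iff `j ∈ {2k−2, 2k−1, n−2, n−1}`. -/
def eVec (n : ℕ) (k : ℕ) : Fin n → ZMod 2 := fun j =>
  if k = 0 then
    if j.val = 0 ∨ j.val = n - 2 then 1
    else if j.val = 1 ∨ j.val = n - 1 then 0
    else (j.val : ZMod 2)
  else if k = 1 then (j.val : ZMod 2)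
  else if j.val = 2 * k - 2 ∨ j.val = 2 * k - 1 ∨ j.val = n - 2 ∨ j.val = n - 1 then 1
  else 0

/-- The code `S_n ⊆ (ℤ/2)^n` spanned by `e_0, …, e_{n/2−1}`. -/
def Scode (n : ℕ) : Submodule (ZMod 2) (Fin n → ZMod 2) :=
  Submodule.span (ZMod 2) (eVec n '' Set.Iio (n / 2))

namespace ScodeAux

lemma zmod2_cases (x : ZMod 2) : x = 0 ∨ x = 1 := by revert x; decide

lemma one_ne_zero2 : (1 : ZMod 2) ≠ 0 := by decide
lemma one_add_one2 : (1 + 1 : ZMod 2) = 0 := by decide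

def wfun (X Y : ℝ) (x : ZMod 2) : ℝ := if x = 0 then X else Y

lemma wfun_zero (X Y : ℝ) : wfun X Y 0 = X := rfl
lemma wfun_one (X Y : ℝ) : wfun X Y 1 = Y := rfl

def chi (x : ZMod 2) : ℝ := if x = 0 then 1 else -1

lemma chi_zero : chi 0 = 1 := rfl
lemma chi_one : chi 1 = -1 := rfl

lemma chi_add (x y : ZMod 2) : chi (x + y) = chi x * chi y := by
  rcases zmod2_cases x with rfl | rfl <;> rcases zmod2_cases y with rfl | rfl <;>
    simp [chi, one_add_one2, one_ne_zero2]

lemma chi_sum {ι : Type*} (s : Finset ι) (b : ι → ZMod 2) :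
    chi (∑ i ∈ s, b i) = ∏ i ∈ s, chi (b i) := by
  induction s using Finset.cons_induction with
  | empty => simp [chi]
  | cons a s ha ih => rw [Finset.sum_cons, Finset.prod_cons, chi_add, ih]

lemma sum_zmod2 (f : ZMod 2 → ℝ) : ∑ x : ZMod 2, f x = f 0 + f 1 := by
  have huniv : (Finset.univ : Finset (ZMod 2)) = {0, 1} := by decide
  rw [huniv, Finset.sum_insert (by decide), Finset.sum_singleton]

lemma sum_prod_fun (p : ℕ) (g : ZMod 2 → ℝ) :
    ∑ b : Fin p → ZMod 2, ∏ i, g (b i) = (g 0 + g 1) ^ p := by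
  have h := Finset.prod_univ_sum (fun _ : Fin p => (univ : Finset (ZMod 2))) (fun _ x => g x)
  rw [Fintype.piFinset_univ] at h
  rw [← h, sum_zmod2 g, Finset.prod_const, Finset.card_univ, Fintype.card_fin]

lemma sum_even (p : ℕ) (f : ZMod 2 → ℝ) :
    ∑ b : Fin p → ZMod 2, ((∏ i, f (b i)) * f (∑ i, b i))
      = ((f 0 + f 1) ^ (p + 1) + (f 0 - f 1) ^ (p + 1)) / 2 := by
  have hf : ∀ s : ZMod 2, f s = (f 0 + f 1) / 2 + (f 0 - f 1) / 2 * chi s := by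
    intro s
    rcases zmod2_cases s with rfl | rfl <;> simp [chi, one_ne_zero2] <;> ring
  calc ∑ b : Fin p → ZMod 2, ((∏ i, f (b i)) * f (∑ i, b i))
      = ∑ b : Fin p → ZMod 2, ((f 0 + f 1) / 2 * ∏ i, f (b i)
          + (f 0 - f 1) / 2 * ∏ i, (f (b i) * chi (b i))) := by
        refine Finset.sum_congr rfl fun b _ => ?_
        rw [hf (∑ i, b i), chi_sum, Finset.prod_mul_distrib]; ring
    _ = (f 0 + f 1) / 2 * (f 0 + f 1) ^ p
          + (f 0 - f 1) / 2 * (f 0 * chi 0 + f 1 * chi 1) ^ p := by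
        rw [Finset.sum_add_distrib, ← Finset.mul_sum, ← Finset.mul_sum,
          sum_prod_fun p f, sum_prod_fun p (fun x => f x * chi x)]
    _ = ((f 0 + f 1) ^ (p + 1) + (f 0 - f 1) ^ (p + 1)) / 2 := by
        rw [chi_zero, chi_one]; ring

lemma eVec_zero_apply (n : ℕ) (j : Fin n) :
    eVec n 0 j = if j.val = 0 ∨ j.val = n - 2 then 1
      else if j.val = 1 ∨ j.val = n - 1 then 0 else (j.val : ZMod 2) := rfl

lemma eVec_one_apply (n : ℕ) (j : Fin n) : eVec n 1 j = (j.val : ZMod 2) := rfl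

lemma eVec_ge2_apply (n k : ℕ) (hk : 2 ≤ k) (j : Fin n) :
    eVec n k j = if j.val = 2 * k - 2 ∨ j.val = 2 * k - 1 ∨ j.val = n - 2 ∨ j.val = n - 1
      then 1 else 0 := by
  rw [eVec, if_neg (by omega), if_neg (by omega)]

/-- Extend `b : Fin (m-1) → ZMod 2` to an `ℕ`-indexed word whose `m-1`-th entry is the sum. -/
def extN (m : ℕ) (b : Fin (m - 1) → ZMod 2) : ℕ → ZMod 2 :=
  fun i => if h : i < m - 1 then b ⟨i, h⟩ else ∑ j, b j

def Mfun (m : ℕ) (x : ZMod 2 × (Fin (m - 1) → ZMod 2)) : Fin (m * 2) → ZMod 2 :=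
  fun j => extN m x.2 (j.val / 2) + x.1 * ((j.val % 2 : ℕ) : ZMod 2)

lemma extN_add (m : ℕ) (b b' : Fin (m - 1) → ZMod 2) (i : ℕ) :
    extN m (b + b') i = extN m b i + extN m b' i := by
  unfold extN; split <;> simp [Finset.sum_add_distrib]

lemma extN_smul (m : ℕ) (c : ZMod 2) (b : Fin (m - 1) → ZMod 2) (i : ℕ) :
    extN m (c • b) i = c * extN m b i := by
  unfold extN; split <;> simp [Finset.mul_sum]

def Mlin (m : ℕ) : (ZMod 2 × (Fin (m - 1) → ZMod 2)) →ₗ[ZMod 2] (Fin (m * 2) → ZMod 2) where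
  toFun := Mfun m
  map_add' x y := by
    funext j
    simp only [Mfun, Prod.snd_add, Prod.fst_add, extN_add, Pi.add_apply]
    ring
  map_smul' c x := by
    funext j
    simp only [Mfun, Prod.smul_snd, Prod.smul_fst, extN_smul, Pi.smul_apply, smul_eq_mul,
      RingHom.id_apply]
    ring

lemma Mlin_apply (m : ℕ) (x) : Mlin m x = Mfun m x := rfl

lemma M_e1 (m : ℕ) : Mfun m (1, 0) = eVec (m * 2) 1 := by
  funext j
  rw [eVec_one_apply]
  simp only [Mfun, extN, one_mul]
  have h1 : (if h : (j.val / 2) < m - 1 then (0 : Fin (m-1) → ZMod 2) ⟨j.val / 2, h⟩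
      else ∑ i : Fin (m-1), (0 : Fin (m-1) → ZMod 2) i) = 0 := by
    split <;> simp
  rw [h1, zero_add, ZMod.natCast_mod]

lemma M_e0 (m : ℕ) (hm : 2 ≤ m) :
    Mfun m (1, Pi.single (⟨0, by omega⟩ : Fin (m - 1)) 1) = eVec (m * 2) 0 := by
  funext j
  obtain ⟨jv, hj⟩ := j
  rw [eVec_zero_apply]
  simp only [Mfun, extN, one_mul]
  by_cases hB : jv = m * 2 - 2
  · have hq : jv / 2 = m - 1 := by omega
    have hr : jv % 2 = 0 := by omega
    rw [hq, hr, dif_neg (lt_irrefl _), if_pos (Or.inr hB),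
      Finset.sum_pi_single' (⟨0, by omega⟩ : Fin (m - 1)) (1 : ZMod 2) univ,
      if_pos (Finset.mem_univ _)]
    simp
  · by_cases hD : jv = m * 2 - 1
    · have hq : jv / 2 = m - 1 := by omega
      have hr : jv % 2 = 1 := by omega
      rw [hq, hr, dif_neg (lt_irrefl _), if_neg (by omega), if_pos (Or.inr hD),
        Finset.sum_pi_single' (⟨0, by omega⟩ : Fin (m - 1)) (1 : ZMod 2) univ,
        if_pos (Finset.mem_univ _)]
      rw [Nat.cast_one, one_add_one2]
    · by_cases hA : jv = 0
      · subst hA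
        rw [show (0 : ℕ) / 2 = 0 from rfl, dif_pos (show 0 < m - 1 by omega),
          Pi.single_eq_same, if_pos (Or.inl rfl),
          show (0 : ℕ) % 2 = 0 from rfl, Nat.cast_zero, add_zero]
      · by_cases hC : jv = 1
        · subst hC
          rw [show (1 : ℕ) / 2 = 0 from rfl, dif_pos (show 0 < m - 1 by omega),
            Pi.single_eq_same, if_neg (by omega), if_pos (Or.inl rfl),
            show (1 : ℕ) % 2 = 1 from rfl, Nat.cast_one, one_add_one2]
        · have hq1 : jv / 2 < m - 1 := by omega
          rw [dif_pos hq1,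
            Pi.single_eq_of_ne (Fin.ne_of_val_ne (show jv / 2 ≠ 0 from by omega)),
            if_neg (by omega), if_neg (by omega), zero_add, ZMod.natCast_mod]

lemma M_ek (m : ℕ) (hm : 2 ≤ m) (i : Fin (m - 1)) (hi : 1 ≤ i.val) :
    Mfun m (0, Pi.single i 1) = eVec (m * 2) (i.val + 1) := by
  funext j
  obtain ⟨jv, hj⟩ := j
  have hiv : i.val < m - 1 := i.2
  rw [eVec_ge2_apply (m * 2) (i.val + 1) (by omega)]
  simp only [Mfun, extN, zero_mul, add_zero]
  have h2k : 2 * (i.val + 1) - 2 = 2 * i.val := by omega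
  have h2k' : 2 * (i.val + 1) - 1 = 2 * i.val + 1 := by omega
  rw [h2k, h2k']
  by_cases h1 : jv / 2 = m - 1
  · rw [dif_neg (by omega), if_pos (by omega),
      Finset.sum_pi_single' i (1 : ZMod 2) univ, if_pos (Finset.mem_univ _)]
  · by_cases h2 : jv / 2 = i.val
    · have hfin : (⟨jv / 2, by omega⟩ : Fin (m - 1)) = i := Fin.ext h2
      rw [dif_pos (by omega : jv / 2 < m - 1), hfin, Pi.single_eq_same, if_pos (by omega)]
    · rw [dif_pos (by omega : jv / 2 < m - 1),
        Pi.single_eq_of_ne (Fin.ne_of_val_ne (show jv / 2 ≠ i.val from h2)),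
        if_neg (by omega)]

lemma e_mem (m : ℕ) (k : ℕ) (hk : k < m) : eVec (m * 2) k ∈ Scode (m * 2) :=
  Submodule.subset_span ⟨k, by simp only [Set.mem_Iio]; omega, rfl⟩

lemma M_single_mem (m : ℕ) (hm : 2 ≤ m) (i : Fin (m - 1)) :
    Mfun m (0, Pi.single i 1) ∈ Scode (m * 2) := by
  by_cases hi : 1 ≤ i.val
  · rw [M_ek m hm i hi]
    exact e_mem m (i.val + 1) (by omega)
  · have h01 : 0 < m - 1 := by omega
    have hi0 : i = ⟨0, h01⟩ := Fin.ext (show i.val = 0 from by omega)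
    subst hi0
    have hpair : ((0 : ZMod 2), Pi.single (⟨0, h01⟩ : Fin (m - 1)) (1 : ZMod 2))
        = ((1 : ZMod 2), Pi.single (⟨0, h01⟩ : Fin (m - 1)) (1 : ZMod 2))
          - ((1 : ZMod 2), (0 : Fin (m - 1) → ZMod 2)) := by
      rw [Prod.mk_sub_mk, sub_zero, show (1 : ZMod 2) - 1 = 0 from by decide]
    rw [← Mlin_apply, hpair, map_sub, Mlin_apply, Mlin_apply, M_e0 m hm, M_e1 m]
    exact sub_mem (e_mem m 0 (by omega)) (e_mem m 1 (by omega))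

lemma M_mem (m : ℕ) (hm : 2 ≤ m) (x : ZMod 2 × (Fin (m - 1) → ZMod 2)) :
    Mfun m x ∈ Scode (m * 2) := by
  obtain ⟨ε, b⟩ := x
  have hdec : (ε, b) = ε • ((1 : ZMod 2), (0 : Fin (m - 1) → ZMod 2))
      + ∑ i : Fin (m - 1), b i • ((0 : ZMod 2), Pi.single i (1 : ZMod 2)) := by
    have h1 : (∑ i : Fin (m - 1), b i • ((0 : ZMod 2), Pi.single i (1 : ZMod 2)))
        = ((0 : ZMod 2), b) := by
      rw [Prod.ext_iff]
      constructor
      · rw [Prod.fst_sum]; simp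
      · rw [Prod.snd_sum]
        simp only [Prod.smul_snd]
        calc ∑ i : Fin (m - 1), b i • Pi.single i (1 : ZMod 2)
            = ∑ i : Fin (m - 1), Pi.single i (b i) :=
              Finset.sum_congr rfl fun i _ => by rw [← Pi.single_smul, smul_eq_mul, mul_one]
          _ = b := Finset.univ_sum_single b
    rw [h1, Prod.smul_mk, smul_zero, smul_eq_mul, mul_one, Prod.mk_add_mk, add_zero, zero_add]
  rw [← Mlin_apply, hdec, map_add, map_smul, map_sum]
  apply add_mem
  · exact Submodule.smul_mem _ _ (by rw [Mlin_apply, M_e1 m]; exact e_mem m 1 (by omega))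
  · refine Submodule.sum_mem _ fun i _ => ?_
    rw [map_smul]
    exact Submodule.smul_mem _ _ (by rw [Mlin_apply]; exact M_single_mem m hm i)

lemma M_surj (m : ℕ) (hm : 2 ≤ m) :
    Scode (m * 2) ≤ LinearMap.range (Mlin m) := by
  rw [Scode, Submodule.span_le]
  rintro _ ⟨k, hk, rfl⟩
  have hk' : k < m := by simp only [Set.mem_Iio] at hk; omega
  rcases Nat.lt_or_ge k 2 with h2 | h2
  · interval_cases k
    · exact ⟨(1, Pi.single (⟨0, by omega⟩ : Fin (m - 1)) 1), M_e0 m hm⟩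
    · exact ⟨(1, 0), M_e1 m⟩
  · have hk1 : k - 1 < m - 1 := by omega
    refine ⟨(0, Pi.single (⟨k - 1, hk1⟩ : Fin (m - 1)) 1), ?_⟩
    rw [Mlin_apply, M_ek m hm ⟨k - 1, hk1⟩ (show 1 ≤ k - 1 from by omega)]
    have hval : (⟨k - 1, hk1⟩ : Fin (m - 1)).val + 1 = k := by
      show k - 1 + 1 = k
      omega
    rw [hval]

lemma M_inj (m : ℕ) (hm : 2 ≤ m) : Function.Injective (Mlin m) := by
  rw [← LinearMap.ker_eq_bot, Submodule.eq_bot_iff]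
  rintro ⟨ε, b⟩ hx
  rw [LinearMap.mem_ker] at hx
  have hb : ∀ i : Fin (m - 1), b i = 0 := by
    intro i
    have h := congrFun hx ⟨2 * i.val, by omega⟩
    have hq : (2 * i.val) / 2 = i.val := by omega
    have hr : (2 * i.val) % 2 = 0 := by omega
    simp only [Mlin_apply, Mfun, hq, hr, Nat.cast_zero, mul_zero, add_zero, Pi.zero_apply,
      extN, dif_pos i.2, Fin.eta] at h
    exact h
  have hε : ε = 0 := by
    have h := congrFun hx ⟨1, by omega⟩
    have h0 : (0 : ℕ) < m - 1 := by omega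
    simp only [Mlin_apply, Mfun, show (1:ℕ)/2 = 0 from rfl, show (1:ℕ)%2 = 1 from rfl,
      Nat.cast_one, mul_one, Pi.zero_apply, extN, dif_pos h0] at h
    rw [hb ⟨0, h0⟩, zero_add] at h
    exact h
  rw [show (0 : ZMod 2 × (Fin (m - 1) → ZMod 2)) = (0, 0) from rfl, Prod.mk.injEq]
  exact ⟨hε, funext hb⟩

lemma term_prod (N : ℕ) (X Y : ℝ) (c : Fin N → ZMod 2) :
    X ^ (N - wt c) * Y ^ wt c = ∏ j, wfun X Y (c j) := by
  have hcard := Finset.card_filter_add_card_filter_not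
    (s := (univ : Finset (Fin N))) (p := fun j => c j = 0)
  rw [Finset.card_univ, Fintype.card_fin] at hcard
  have hwt : wt c = (Finset.univ.filter fun j => ¬ c j = 0).card := rfl
  have hx : N - wt c = (Finset.univ.filter fun j => c j = 0).card := by
    rw [hwt]; omega
  unfold wfun
  rw [Finset.prod_ite (fun _ => X) (fun _ => Y), Finset.prod_const, Finset.prod_const, hx, hwt]

lemma prod_pairs (m : ℕ) (g : ℕ → ℕ → ℝ) :
    ∏ j : Fin (m * 2), g (j.val / 2) (j.val % 2)
      = ∏ i : Fin m, (g i.val 0 * g i.val 1) := by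
  rw [← Equiv.prod_comp (finProdFinEquiv : Fin m × Fin 2 ≃ Fin (m * 2))
    (fun j => g (j.val / 2) (j.val % 2))]
  rw [Fintype.prod_prod_type]
  refine Finset.prod_congr rfl fun i _ => ?_
  rw [Fin.prod_univ_two]
  have hval : ∀ r : Fin 2, ((finProdFinEquiv (i, r) : Fin (m * 2))).val = r.val + 2 * i.val := by
    intro r
    simp [finProdFinEquiv]
  rw [hval 0, hval 1]
  have e1 : ((0 : Fin 2).val + 2 * i.val) / 2 = i.val := by omega
  have e2 : ((0 : Fin 2).val + 2 * i.val) % 2 = 0 := by omega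
  have e3 : ((1 : Fin 2).val + 2 * i.val) / 2 = i.val := by omega
  have e4 : ((1 : Fin 2).val + 2 * i.val) % 2 = 1 := by omega
  rw [e1, e2, e3, e4]

lemma prod_extN (m : ℕ) (hm : 2 ≤ m) (b : Fin (m - 1) → ZMod 2) (F : ZMod 2 → ℝ) :
    ∏ i : Fin m, F (extN m b i.val) = (∏ i : Fin (m - 1), F (b i)) * F (∑ j, b j) := by
  have key : ∀ G : ℕ → ℝ, ∏ i ∈ range m, G i = (∏ i ∈ range (m - 1), G i) * G (m - 1) := by
    intro G
    conv_lhs => rw [show m = (m - 1) + 1 from by omega]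
    rw [Finset.prod_range_succ]
  rw [Fin.prod_univ_eq_prod_range (fun i => F (extN m b i)) m, key]
  congr 1
  · rw [← Fin.prod_univ_eq_prod_range (fun i => F (extN m b i)) (m - 1)]
    refine Finset.prod_congr rfl fun i _ => ?_
    rw [extN, dif_pos i.2, Fin.eta]
  · rw [extN, dif_neg (lt_irrefl _)]

end ScodeAux

open ScodeAux

/-- For `n ≡ 0 (mod 4)`, the weight enumerator of `S_n` satisfies
`∑_{c ∈ S_n} X^{n−wt(c)} Y^{wt(c)}
  = (1/2)((X²−Y²)^{n/2} + (X²+Y²)^{n/2}) + 2^{n/2−1}(XY)^{n/2}` for all real `X`, `Y`. -/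
theorem Scode_weight_enumerator (n : ℕ) (hn : 0 < n) (h4 : n % 4 = 0) (X Y : ℝ) :
    ∑' c : (Scode n), X ^ (n - wt (c : Fin n → ZMod 2)) * Y ^ wt (c : Fin n → ZMod 2) =
      (1 / 2) * ((X ^ 2 - Y ^ 2) ^ (n / 2) + (X ^ 2 + Y ^ 2) ^ (n / 2)) +
        2 ^ (n / 2 - 1) * (X * Y) ^ (n / 2) := by
  obtain ⟨m, rfl⟩ : ∃ m, n = m * 2 := ⟨n / 2, by omega⟩
  have hm : 2 ≤ m := by omega
  have hdiv : m * 2 / 2 = m := by omega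
  have hMm : ∀ x, Mfun m x ∈ Scode (m * 2) := M_mem m hm
  let f : (ZMod 2 × (Fin (m - 1) → ZMod 2)) → Scode (m * 2) := fun x => ⟨Mfun m x, hMm x⟩
  have hf : Function.Bijective f := by
    constructor
    · intro x y hxy
      exact M_inj m hm (by simpa [f, Subtype.ext_iff, Mlin_apply] using hxy)
    · rintro ⟨c, hc⟩
      obtain ⟨x, hx⟩ := M_surj m hm hc
      exact ⟨x, Subtype.ext hx⟩
  let E := Equiv.ofBijective f hf
  letI : Fintype (Scode (m * 2)) := Fintype.ofFinite _
  rw [tsum_fintype, ← Equiv.sum_comp E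
    (fun c : Scode (m * 2) =>
      X ^ (m * 2 - wt (c : Fin (m * 2) → ZMod 2)) * Y ^ wt (c : Fin (m * 2) → ZMod 2))]
  have hterm : ∀ x, X ^ (m * 2 - wt ((E x : Scode (m * 2)) : Fin (m * 2) → ZMod 2))
      * Y ^ wt ((E x : Scode (m * 2)) : Fin (m * 2) → ZMod 2)
      = ∏ i : Fin m, (wfun X Y (extN m x.2 i.val) * wfun X Y (extN m x.2 i.val + x.1)) := by
    intro x
    have hcoe : ((E x : Scode (m * 2)) : Fin (m * 2) → ZMod 2) = Mfun m x := rfl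
    rw [hcoe, term_prod]
    have hpt : ∀ j : Fin (m * 2), wfun X Y (Mfun m x j)
        = (fun q r => wfun X Y (extN m x.2 q + x.1 * ((r : ℕ) : ZMod 2))) (j.val / 2) (j.val % 2) :=
      fun j => rfl
    rw [Finset.prod_congr rfl (fun j _ => hpt j),
      prod_pairs m (fun q r => wfun X Y (extN m x.2 q + x.1 * ((r : ℕ) : ZMod 2)))]
    refine Finset.prod_congr rfl fun i _ => ?_
    norm_num
  rw [Finset.sum_congr rfl (fun x _ => hterm x)]
  rw [Fintype.sum_prod_type]
  rw [sum_zmod2 (fun ε => ∑ b : Fin (m - 1) → ZMod 2,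
    ∏ i : Fin m, (wfun X Y (extN m b i.val) * wfun X Y (extN m b i.val + ε)))]
  have hzero : ∑ b : Fin (m - 1) → ZMod 2,
      ∏ i : Fin m, (wfun X Y (extN m b i.val) * wfun X Y (extN m b i.val + 0))
      = ((X ^ 2 + Y ^ 2) ^ m + (X ^ 2 - Y ^ 2) ^ m) / 2 := by
    have h1 : ∀ b : Fin (m - 1) → ZMod 2,
        ∏ i : Fin m, (wfun X Y (extN m b i.val) * wfun X Y (extN m b i.val + 0))
        = (∏ i : Fin (m - 1), (fun x => wfun X Y x * wfun X Y x) (b i))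
            * (fun x => wfun X Y x * wfun X Y x) (∑ j, b j) := by
      intro b
      rw [← prod_extN m hm b (fun x => wfun X Y x * wfun X Y x)]
      exact Finset.prod_congr rfl fun i _ => by rw [add_zero]
    rw [Finset.sum_congr rfl (fun b _ => h1 b),
      sum_even (m - 1) (fun x => wfun X Y x * wfun X Y x)]
    have hm1 : m - 1 + 1 = m := by omega
    rw [hm1]
    simp only [wfun_zero, wfun_one]
    ring
  have hone : ∑ b : Fin (m - 1) → ZMod 2,
      ∏ i : Fin m, (wfun X Y (extN m b i.val) * wfun X Y (extN m b i.val + 1))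
      = 2 ^ (m - 1) * (X * Y) ^ m := by
    have h1 : ∀ b : Fin (m - 1) → ZMod 2, ∀ i : Fin m,
        wfun X Y (extN m b i.val) * wfun X Y (extN m b i.val + 1) = X * Y := by
      intro b i
      rcases zmod2_cases (extN m b i.val) with h | h
      · rw [h, zero_add, wfun_zero, wfun_one]
      · rw [h, one_add_one2, wfun_one, wfun_zero, mul_comm]
    have h2 : ∀ b : Fin (m - 1) → ZMod 2,
        ∏ i : Fin m, (wfun X Y (extN m b i.val) * wfun X Y (extN m b i.val + 1))
        = (X * Y) ^ m := by
      intro b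
      rw [Finset.prod_congr rfl (fun i _ => h1 b i), Finset.prod_const, Finset.card_univ,
        Fintype.card_fin]
    rw [Finset.sum_congr rfl (fun b _ => h2 b), Finset.sum_const, Finset.card_univ,
      Fintype.card_fun, Fintype.card_fin, ZMod.card, nsmul_eq_mul]
    push_cast
    ring
  rw [hzero, hone, hdiv]
  ring
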